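/- The reciprocal clustering output is a valid ultrametric: for a finite asymmetric network (X, A_X), the function u^R_X(x,x') = min over chains C(x,x') of the max over consecutive pairs of max(A_X(x_i,x_{i+1}), A_X(x_{i+1},x_i)) satisfies the strong triangle inequality u^R_X(x,x') ≤ max(u^R_X(x,x''), u^R_X(x'',x')) for all x, x', x'' in X. -/
import Mathlib

/-- Maximum dissimilarity over consecutive links of a chain (list of nodes). -/
def listCost {X : Type*} (A : X → X → ℝ) (l : List X) : ℝ :=
  (l.zip l.tail).foldr (fun p r => max (A p.1 p.2) r) 0

/-- Minimum over chains from `x` to `x'` of the maximum link cost. -/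
noncomputable def minChainCost {X : Type*} (A : X → X → ℝ) (x x' : X) : ℝ :=
  sInf {c : ℝ | ∃ l : List X, l.head? = some x ∧ l.getLast? = some x' ∧ listCost A l = c}

/-- Symmetrized dissimilarity Ā. -/
def symDis {X : Type*} (A : X → X → ℝ) (x x' : X) : ℝ := max (A x x') (A x' x)

/-- Reciprocal ultrametric. -/
noncomputable def uR {X : Type*} (A : X → X → ℝ) (x x' : X) : ℝ := minChainCost (symDis A) x x'

/-- Nonreciprocal ultrametric. -/
noncomputable def uNR {X : Type*} (A : X → X → ℝ) (x x' : X) : ℝ :=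
  max (minChainCost A x x') (minChainCost A x' x)

/-- A (finite, asymmetric) network dissimilarity: nonnegative, vanishing exactly on the diagonal. -/
def IsNetwork {X : Type*} (A : X → X → ℝ) : Prop :=
  (∀ x x', 0 ≤ A x x') ∧ (∀ x x', A x x' = 0 ↔ x = x')

/-- Ultrametric: nonnegative, symmetric, identity of indiscernibles, strong triangle inequality. -/
def IsUltra {X : Type*} (u : X → X → ℝ) : Prop :=
  (∀ x x', 0 ≤ u x x') ∧ (∀ x x', u x x' = u x' x) ∧
  (∀ x x', u x x' = 0 ↔ x = x') ∧
  (∀ x x' x'', u x x' ≤ max (u x x'') (u x'' x'))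

lemma listCost_nonneg {X : Type*} (A : X → X → ℝ) (l : List X) : 0 ≤ listCost A l := by
  unfold listCost
  induction (l.zip l.tail) with
  | nil => simp
  | cons p t ih => exact le_trans ih (le_max_right _ _)

lemma listCost_cons_cons {X : Type*} (A : X → X → ℝ) (a b : X) (t : List X) :
    listCost A (a :: b :: t) = max (A a b) (listCost A (b :: t)) := rfl

lemma listCost_append {X : Type*} (A : X → X → ℝ) :
    ∀ (l1 l2 : List X), l1.getLast? = l2.head? →
      listCost A (l1 ++ l2.tail) ≤ max (listCost A l1) (listCost A l2)
  | [], l2, h => by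
      have : l2 = [] := by cases l2 <;> simp_all
      subst this; simp [listCost]
  | [a], l2, h => by
      cases l2 with
      | nil => simp at h
      | cons b t =>
        simp at h; subst h
        simpa using le_max_right (listCost A [a]) (listCost A (a :: t))
  | a :: b :: t, l2, h => by
      have h' : (b :: t).getLast? = l2.head? := by simpa using h
      have ih := listCost_append A (b :: t) l2 h'
      have : listCost A ((a :: b :: t) ++ l2.tail) =
          max (A a b) (listCost A ((b :: t) ++ l2.tail)) := rfl
      rw [this, listCost_cons_cons]
      calc max (A a b) (listCost A ((b :: t) ++ l2.tail))
          ≤ max (A a b) (max (listCost A (b :: t)) (listCost A l2)) := by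
            exact max_le_max_left _ ih
        _ ≤ max (max (A a b) (listCost A (b :: t))) (listCost A l2) := by
            rw [max_assoc]

theorem reciprocal_strong_triangle {X : Type*} [Fintype X] (A : X → X → ℝ)
    (hA : IsNetwork A) :
    ∀ x x' x'' : X, uR A x x' ≤ max (uR A x x'') (uR A x'' x') := by
  intro x x' x''
  set B := symDis A
  have hset : ∀ a b : X,
      {c : ℝ | ∃ l : List X, l.head? = some a ∧ l.getLast? = some b ∧ listCost B l = c}.Nonempty :=
    fun a b => ⟨listCost B [a, b], [a, b], by simp, by simp, rfl⟩
  have hbdd : ∀ a b : X, BddBelow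
      {c : ℝ | ∃ l : List X, l.head? = some a ∧ l.getLast? = some b ∧ listCost B l = c} := by
    intro a b
    refine ⟨0, fun c hc => ?_⟩
    obtain ⟨l, _, _, rfl⟩ := hc
    exact listCost_nonneg B l
  refine le_of_forall_pos_le_add fun ε hε => ?_
  obtain ⟨c1, ⟨l1, h1h, h1l, h1c⟩, hc1⟩ := Real.lt_sInf_add_pos (hset x x'') hε
  obtain ⟨c2, ⟨l2, h2h, h2l, h2c⟩, hc2⟩ := Real.lt_sInf_add_pos (hset x'' x') hε
  set l := l1 ++ l2.tail with hl
  have hlh : l.head? = some x := by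
    rw [hl, List.head?_append, h1h]; rfl
  have hll : l.getLast? = some x' := by
    cases l2 with
    | nil => simp at h2h
    | cons b t =>
      cases t with
      | nil =>
        simp at h2h h2l
        subst h2h
        simp [hl, h1l, h2l]
      | cons u s =>
        rw [hl, List.getLast?_append]
        have : (u :: s).getLast? = some x' := by simpa using h2l
        simp [this]
  have hmem : listCost B l ∈
      {c : ℝ | ∃ ll : List X, ll.head? = some x ∧ ll.getLast? = some x' ∧ listCost B ll = c} :=
    ⟨l, hlh, hll, rfl⟩
  have hchain : l1.getLast? = l2.head? := by rw [h1l, h2h]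
  have hcost : listCost B l ≤ max c1 c2 := by
    rw [← h1c, ← h2c]; exact listCost_append B l1 l2 hchain
  have h1 : uR A x x' ≤ listCost B l := csInf_le (hbdd x x') hmem
  calc uR A x x' ≤ max c1 c2 := le_trans h1 hcost
    _ ≤ max (uR A x x'' + ε) (uR A x'' x' + ε) := max_le_max hc1.le hc2.le
    _ = max (uR A x x'') (uR A x'' x') + ε := by rw [max_add_add_right]
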